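/- For ε > 0 and ρ > 0, the anisotropic proximity operator associated with h(q) = max(−ρ, q) restricted to dom = (−∞, ρ] (the Legendre transform of the TV entropy) is the clamping map aprox_h(p) = min(max(p, −ρ), ρ). -/
import Mathlib


open Real

/-- Secant lower bound: for `0 ≤ b ≤ a`, `a - b ≤ exp a - exp b`. -/
lemma exp_secant_lower (a b : ℝ) (hb : 0 ≤ b) (hab : b ≤ a) :
    a - b ≤ Real.exp a - Real.exp b := by
  have h1 : (a - b) + 1 ≤ Real.exp (a - b) := Real.add_one_le_exp _
  have h2 : (1 : ℝ) ≤ Real.exp b := Real.one_le_exp hb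
  have h3 : Real.exp a = Real.exp b * Real.exp (a - b) := by
    rw [← Real.exp_add]; ring_nf
  nlinarith [Real.exp_pos b, Real.exp_pos (a - b)]

/-- Secant upper bound: for `a ≤ b ≤ 0`, `exp b - exp a ≤ b - a`. -/
lemma exp_secant_upper (a b : ℝ) (hb : b ≤ 0) (hab : a ≤ b) :
    Real.exp b - Real.exp a ≤ b - a := by
  have h1 : (a - b) + 1 ≤ Real.exp (a - b) := Real.add_one_le_exp _
  have h2 : Real.exp b ≤ 1 := Real.exp_le_one_iff.mpr hb
  have h3 : Real.exp a = Real.exp b * Real.exp (a - b) := by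
    rw [← Real.exp_add]; ring_nf
  nlinarith [Real.exp_pos b, Real.exp_pos (a - b)]

/-- For `ε, ρ > 0`, the anisotropic proximity operator associated with
`h(q) = max(−ρ, q)` on the domain `(−∞, ρ]` (the Legendre transform of the TV entropy)
is the clamping map `p ↦ min(max(p, −ρ), ρ)`: the clamp lies in the domain and
minimizes `q ↦ ε e^{(p−q)/ε} + h(q)` over the domain. -/
theorem aprox_TV (ε ρ : ℝ) (hε : 0 < ε) (hρ : 0 < ρ) (p : ℝ) :
    min (max p (-ρ)) ρ ≤ ρ ∧
    ∀ q : ℝ, q ≤ ρ →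
      ε * Real.exp ((p - min (max p (-ρ)) ρ) / ε) + max (-ρ) (min (max p (-ρ)) ρ)
        ≤ ε * Real.exp ((p - q) / ε) + max (-ρ) q := by
  refine ⟨min_le_right _ _, fun q hq => ?_⟩
  rcases le_total p (-ρ) with hp | hp
  · -- clamp = -ρ
    have hc : min (max p (-ρ)) ρ = -ρ := by
      rw [max_eq_right hp, min_eq_left (by linarith)]
    rw [hc, max_eq_right (le_refl (-ρ))]
    rcases le_total q (-ρ) with hq' | hq'
    · rw [max_eq_left hq']
      have h1 : (p - -ρ) / ε ≤ (p - q) / ε := by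
        apply div_le_div_of_nonneg_right (by linarith) hε.le |>.trans_eq rfl
      have := Real.exp_le_exp.mpr h1
      nlinarith
    · rw [max_eq_right hq']
      have key := exp_secant_upper ((p - q) / ε) ((p - -ρ) / ε)
        (by apply div_nonpos_of_nonpos_of_nonneg <;> linarith)
        (by apply div_le_div_of_nonneg_right (by linarith) hε.le)
      have h2 : (p - -ρ) / ε - (p - q) / ε = (q + ρ) / ε := by ring
      rw [h2] at key
      have h3 : ε * ((q + ρ) / ε) = q + ρ := by field_simp
      nlinarith
  · rcases le_total p ρ with hp2 | hp2
    · -- clamp = p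
      have hc : min (max p (-ρ)) ρ = p := by
        rw [max_eq_left hp, min_eq_left hp2]
      rw [hc, max_eq_right hp, sub_self, zero_div, Real.exp_zero, mul_one]
      have h1 : (p - q) / ε + 1 ≤ Real.exp ((p - q) / ε) := Real.add_one_le_exp _
      have h3 : ε * ((p - q) / ε) = p - q := by field_simp
      rcases le_total q (-ρ) with hq' | hq'
      · rw [max_eq_left hq']; nlinarith
      · rw [max_eq_right hq']; nlinarith
    · -- clamp = ρ
      have hc : min (max p (-ρ)) ρ = ρ := by
        rw [max_eq_left hp, min_eq_right hp2]
      rw [hc, max_eq_right (by linarith : -ρ ≤ ρ)]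
      have key := exp_secant_lower ((p - q) / ε) ((p - ρ) / ε)
        (by apply div_nonneg (by linarith) hε.le)
        (by apply div_le_div_of_nonneg_right (by linarith) hε.le)
      have h2 : (p - q) / ε - (p - ρ) / ε = (ρ - q) / ε := by ring
      rw [h2] at key
      have h3 : ε * ((ρ - q) / ε) = ρ - q := by field_simp
      rcases le_total q (-ρ) with hq' | hq'
      · rw [max_eq_left hq']; nlinarith
      · rw [max_eq_right hq']; nlinarith
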